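/- arXiv:1601.03337 — 2 statements merged into one kernel-verified Lean document; each statement's English description precedes it below -/
import Mathlib

section
/- For σ > 1/2 there exists C_σ > 0 such that for all v ∈ H^σ(T) and f ∈ L²(T), the commutator satisfies ‖[H; v]f‖_{L²(T)} ≤ C_σ ‖v‖_{H^σ(T)} ‖f‖_{L²(T)}, where [H;v]f := H[vf] - v·H[f]. -/
open scoped Real

noncomputable section

/-- The Japanese-bracket power `⟨k⟩ˢ = (1 + |k|²)^{s/2}`. -/
def japow (k : ℤ) (s : ℝ) : ℝ := (1 + (k : ℝ) ^ 2) ^ (s / 2)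

/-- The squared `Hˢ(𝕋)` norm of a periodic function described by its sequence of
Fourier coefficients `c`: `‖f‖²_{Hˢ} = 2π·Σ_k ⟨k⟩^{2s}|f^(k)|²`. -/
def hsNormSq (s : ℝ) (c : ℤ → ℂ) : ℝ := 2 * Real.pi * ∑' k : ℤ, japow k (2 * s) * ‖c k‖ ^ 2

/-- The `Hˢ(𝕋)` norm in terms of Fourier coefficients. -/
def hsNorm (s : ℝ) (c : ℤ → ℂ) : ℝ := Real.sqrt (hsNormSq s c)

/-- Membership in the Sobolev space `Hˢ(𝕋)`, in terms of Fourier coefficients. -/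
def MemHs (s : ℝ) (c : ℤ → ℂ) : Prop := Summable fun k : ℤ => japow k (2 * s) * ‖c k‖ ^ 2

/-- The discrete Hilbert transform on the Fourier side: `(H[f])^(k) = -i·sgn(k)·f^(k)`. -/
def hilbC (c : ℤ → ℂ) : ℤ → ℂ := fun k => -Complex.I * (Int.sign k : ℤ) * c k

/-- The `x`-derivative on the Fourier side: `(∂ₓf)^(k) = i·k·f^(k)`. -/
def derC (c : ℤ → ℂ) : ℤ → ℂ := fun k => Complex.I * (k : ℂ) * c k

/-- The pointwise product of two periodic functions on the Fourier side
(discrete convolution of the coefficients). -/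
def convC (a b : ℤ → ℂ) : ℤ → ℂ := fun k => ∑' ℓ : ℤ, a (k - ℓ) * b ℓ

/-- The commutator `[H; v]f = H[v·f] - v·H[f]` on the Fourier side. -/
def commH (v f : ℤ → ℂ) : ℤ → ℂ := fun k => hilbC (convC v f) k - convC v (hilbC f) k


open scoped ENNReal NNReal



lemma emul_le_sq_add_sq (p q : ℝ≥0∞) : p * q ≤ p ^ 2 + q ^ 2 := by
  rcases le_total p q with h | h
  · calc p * q ≤ q * q := mul_le_mul_left h q
      _ = q ^ 2 := (sq q).symm
      _ ≤ _ := le_add_self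
  · calc p * q ≤ p * p := mul_le_mul_right h p
      _ = p ^ 2 := (sq p).symm
      _ ≤ _ := le_self_add

lemma ecs (x y : ℤ → ℝ≥0∞) :
    (∑' k, x k * y k) ^ 2 ≤ 2 * ((∑' k, x k ^ 2) * (∑' k, y k ^ 2)) := by
  have expand : (∑' k, x k * y k) ^ 2 = ∑' k, ∑' l, (x k * y k) * (x l * y l) := by
    rw [sq, ← ENNReal.tsum_mul_right]
    exact tsum_congr fun k => (ENNReal.tsum_mul_left).symm
  rw [expand]
  have h1 : ∑' (k : ℤ), ∑' (l : ℤ), (x k * y l) ^ 2 = (∑' k, x k ^ 2) * (∑' k, y k ^ 2) := by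
    rw [← ENNReal.tsum_mul_right]
    exact tsum_congr fun k => by rw [← ENNReal.tsum_mul_left]; exact tsum_congr fun l => by ring
  have h2 : ∑' (k : ℤ), ∑' (l : ℤ), (x l * y k) ^ 2 = (∑' k, x k ^ 2) * (∑' k, y k ^ 2) := by
    rw [ENNReal.tsum_comm]
    rw [← ENNReal.tsum_mul_right]
    exact tsum_congr fun k => by rw [← ENNReal.tsum_mul_left]; exact tsum_congr fun l => by ring
  calc ∑' k, ∑' l, (x k * y k) * (x l * y l)
      ≤ ∑' (k : ℤ), ∑' (l : ℤ), ((x k * y l) ^ 2 + (x l * y k) ^ 2) := by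
        refine ENNReal.tsum_le_tsum fun k => ENNReal.tsum_le_tsum fun l => ?_
        have : (x k * y k) * (x l * y l) = (x k * y l) * (x l * y k) := by ring
        rw [this]; exact emul_le_sq_add_sq _ _
    _ = (∑' (k : ℤ), ∑' (l : ℤ), (x k * y l) ^ 2)
        + ∑' (k : ℤ), ∑' (l : ℤ), (x l * y k) ^ 2 := by
        simp_rw [ENNReal.tsum_add]
    _ = 2 * ((∑' k, x k ^ 2) * (∑' k, y k ^ 2)) := by rw [h1, h2]; ring

lemma etriple (a b : ℤ → ℝ≥0∞) :
    ∑' (k : ℤ), ∑' (l : ℤ), ∑' (m : ℤ), a (k - l) * a (k - m) * b l ^ 2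
      = (∑' k, a k) ^ 2 * ∑' k, b k ^ 2 := by
  have hshift : ∀ k : ℤ, ∑' (m : ℤ), a (k - m) = ∑' k, a k := fun k =>
    (Equiv.subLeft k).tsum_eq a
  have hshift2 : ∀ l : ℤ, ∑' (k : ℤ), a (k - l) = ∑' k, a k := fun l =>
    (Equiv.subRight l).tsum_eq a
  calc ∑' (k : ℤ), ∑' (l : ℤ), ∑' (m : ℤ), a (k - l) * a (k - m) * b l ^ 2
      = ∑' (k : ℤ), ∑' (l : ℤ), (a (k - l) * b l ^ 2) * ∑' k, a k := by
        refine tsum_congr fun k => tsum_congr fun l => ?_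
        rw [← hshift k, ← ENNReal.tsum_mul_left]
        exact tsum_congr fun m => by ring
    _ = (∑' (k : ℤ), ∑' (l : ℤ), a (k - l) * b l ^ 2) * ∑' k, a k := by
        rw [← ENNReal.tsum_mul_right]
        exact tsum_congr fun k => ENNReal.tsum_mul_right
    _ = ((∑' k, a k) * ∑' k, b k ^ 2) * ∑' k, a k := by
        congr 1
        rw [ENNReal.tsum_comm]
        calc ∑' (l : ℤ), ∑' (k : ℤ), a (k - l) * b l ^ 2
            = ∑' (l : ℤ), (∑' k, a k) * b l ^ 2 := by
              refine tsum_congr fun l => ?_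
              rw [ENNReal.tsum_mul_right, hshift2 l]
          _ = (∑' k, a k) * ∑' k, b k ^ 2 := by rw [← ENNReal.tsum_mul_left]
    _ = (∑' k, a k) ^ 2 * ∑' k, b k ^ 2 := by ring

lemma eyoung (a b : ℤ → ℝ≥0∞) :
    ∑' (k : ℤ), (∑' (l : ℤ), a (k - l) * b l) ^ 2
      ≤ 2 * ((∑' k, a k) ^ 2 * ∑' k, b k ^ 2) := by
  have expand : ∀ k : ℤ, (∑' (l : ℤ), a (k - l) * b l) ^ 2
      = ∑' (l : ℤ), ∑' (m : ℤ), (a (k - l) * b l) * (a (k - m) * b m) := by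
    intro k
    rw [sq, ← ENNReal.tsum_mul_right]
    exact tsum_congr fun l => (ENNReal.tsum_mul_left).symm
  calc ∑' (k : ℤ), (∑' (l : ℤ), a (k - l) * b l) ^ 2
      ≤ ∑' (k : ℤ), ∑' (l : ℤ), ∑' (m : ℤ),
          (a (k - l) * a (k - m) * b l ^ 2 + a (k - l) * a (k - m) * b m ^ 2) := by
        refine ENNReal.tsum_le_tsum fun k => ?_
        rw [expand k]
        refine ENNReal.tsum_le_tsum fun l => ENNReal.tsum_le_tsum fun m => ?_
        have h := emul_le_sq_add_sq (b l) (b m)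
        calc (a (k - l) * b l) * (a (k - m) * b m)
            = (a (k - l) * a (k - m)) * (b l * b m) := by ring
          _ ≤ (a (k - l) * a (k - m)) * (b l ^ 2 + b m ^ 2) := mul_le_mul_right h _
          _ = _ := by ring
    _ = (∑' (k : ℤ), ∑' (l : ℤ), ∑' (m : ℤ), a (k - l) * a (k - m) * b l ^ 2)
        + ∑' (k : ℤ), ∑' (l : ℤ), ∑' (m : ℤ), a (k - l) * a (k - m) * b m ^ 2 := by
        simp_rw [ENNReal.tsum_add]
    _ = 2 * ((∑' k, a k) ^ 2 * ∑' k, b k ^ 2) := by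
        rw [etriple a b]
        have : ∑' (k : ℤ), ∑' (l : ℤ), ∑' (m : ℤ), a (k - l) * a (k - m) * b m ^ 2
            = ∑' (k : ℤ), ∑' (l : ℤ), ∑' (m : ℤ), a (k - l) * a (k - m) * b l ^ 2 := by
          refine tsum_congr fun k => ?_
          rw [ENNReal.tsum_comm]
          exact tsum_congr fun l => tsum_congr fun m => by ring
        rw [this, etriple a b]; ring


lemma japow_nonneg (k : ℤ) (s : ℝ) : 0 ≤ japow k s :=
  Real.rpow_nonneg (by positivity) _

lemma japow_base_pos (k : ℤ) : (0:ℝ) < 1 + (k : ℝ) ^ 2 := by positivity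

lemma japow_mul_neg (k : ℤ) (s : ℝ) : japow k (-s) * japow k s = 1 := by
  unfold japow
  rw [← Real.rpow_add (japow_base_pos k)]
  ring_nf
  exact Real.rpow_zero _

lemma japow_sq (k : ℤ) (s : ℝ) : japow k s ^ 2 = japow k (2 * s) := by
  unfold japow
  rw [← Real.rpow_natCast ((1 + (k:ℝ)^2) ^ (s/2)) 2, ← Real.rpow_mul (japow_base_pos k).le]
  rw [show ((2:ℕ):ℝ) = 2 by norm_num]
  ring_nf

lemma japow_zero (k : ℤ) : japow k 0 = 1 := by
  unfold japow; norm_num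

lemma japow_summable {σ : ℝ} (hσ : 1 / 2 < σ) :
    Summable fun k : ℤ => japow k (-(2 * σ)) := by
  have h2σ : 1 < 2 * σ := by linarith
  have hmaj : Summable fun k : ℤ => (if k = 0 then (1:ℝ) else 0) + |(k:ℝ)| ^ (-(2*σ)) := by
    refine Summable.add ?_ (Real.summable_abs_int_rpow h2σ)
    apply summable_of_ne_finset_zero (s := {0})
    intro b hb
    simp only [Finset.mem_singleton] at hb
    simp [hb]
  refine Summable.of_nonneg_of_le (fun k => japow_nonneg k _) (fun k => ?_) hmaj
  by_cases hk : k = 0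
  · subst hk
    have : japow 0 (-(2*σ)) = 1 := by unfold japow; norm_num
    rw [this]
    simp only [if_pos rfl]
    have h0 : (0:ℝ) ≤ |((0:ℤ):ℝ)| ^ (-(2*σ)) := Real.rpow_nonneg (abs_nonneg _) _
    simp only [if_true]
    push_cast at h0 ⊢
    linarith
  · simp only [if_neg hk, zero_add]
    have hk1 : (1:ℝ) ≤ |(k:ℝ)| := by
      have : (1:ℤ) ≤ |k| := Int.one_le_abs (by exact_mod_cast hk)
      calc (1:ℝ) ≤ (|k| : ℤ) := by exact_mod_cast this
        _ = |(k:ℝ)| := by push_cast; rfl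
    have hkpos : (0:ℝ) < |(k:ℝ)| := by linarith
    have habs : |(k:ℝ)| ^ (-(2*σ)) = (|(k:ℝ)| ^ 2) ^ (-(2*σ)/2) := by
      rw [← Real.rpow_natCast |(k:ℝ)| 2, ← Real.rpow_mul (abs_nonneg _)]
      rw [show ((2:ℕ):ℝ) = 2 by norm_num]
      ring_nf
    rw [habs]
    unfold japow
    apply Real.rpow_le_rpow_of_nonpos (by positivity)
    · rw [sq_abs]; linarith
    · have : (0:ℝ) < 2 * σ := by linarith
      have h := neg_nonpos_of_nonneg this.le
      linarith [this]

lemma final_sqrt (KR A B S C : ℝ) (hKR0 : 0 ≤ KR) (hA0 : 0 ≤ A) (hB0 : 0 ≤ B)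
    (hS : S ≤ 16 * (KR * (A * B))) (hC : C = Real.sqrt (8 * KR / Real.pi) + 1) :
    Real.sqrt (2 * Real.pi * S) ≤ C * Real.sqrt (2 * Real.pi * A) * Real.sqrt (2 * Real.pi * B) := by
  have hπ := Real.pi_pos
  have hC0 : 0 ≤ C := by rw [hC]; positivity
  have hq : 0 ≤ 8 * KR / Real.pi := div_nonneg (by linarith) hπ.le
  have hCsq' : 8 * KR ≤ C ^ 2 * Real.pi := by
    have h1 : 8 * KR / Real.pi ≤ C ^ 2 := by
      rw [hC]; nlinarith [Real.sq_sqrt hq, Real.sqrt_nonneg (8 * KR / Real.pi)]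
    calc 8 * KR = (8 * KR / Real.pi) * Real.pi := by field_simp
      _ ≤ C ^ 2 * Real.pi := mul_le_mul_of_nonneg_right h1 hπ.le
  have key : 2 * Real.pi * S ≤ C ^ 2 * ((2 * Real.pi * A) * (2 * Real.pi * B)) := by
    have h2 := mul_le_mul_of_nonneg_right hCsq'
      (mul_nonneg (mul_nonneg (by linarith : (0:ℝ) ≤ 4 * Real.pi) hA0) hB0)
    have h3 : 2 * Real.pi * S ≤ 2 * Real.pi * (16 * (KR * (A * B))) := by nlinarith
    nlinarith [h2, h3]
  calc Real.sqrt (2 * Real.pi * S)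
      ≤ Real.sqrt (C ^ 2 * ((2 * Real.pi * A) * (2 * Real.pi * B))) := Real.sqrt_le_sqrt key
    _ = C * Real.sqrt (2 * Real.pi * A) * Real.sqrt (2 * Real.pi * B) := by
      rw [Real.sqrt_mul (by positivity), Real.sqrt_mul (mul_nonneg (by linarith) hA0),
        Real.sqrt_sq hC0, ← mul_assoc]

lemma sign_norm_le (n : ℤ) : ‖((Int.sign n : ℤ) : ℂ)‖ ≤ 1 := by
  rcases n with m | m
  · rcases m with _ | m <;> simp [Int.sign]
  · simp [Int.sign]

set_option maxHeartbeats 1000000 in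
/-- For `σ > 1/2` there is `C > 0` such that for all `v ∈ H^σ` and
`f ∈ L²`, `‖[H; v]f‖_{L²} ≤ C * ‖v‖_{H^σ} * ‖f‖_{L²}`, where `[H;v]f = H[vf] - v·H[f]`. -/
theorem stmt_8 (σ : ℝ) (hσ : 1 / 2 < σ) :
    ∃ C > (0 : ℝ), ∀ v f : ℤ → ℂ, MemHs σ v → MemHs 0 f →
      hsNorm 0 (commH v f) ≤ C * hsNorm σ v * hsNorm 0 f := by
  have hK : Summable fun k : ℤ => japow k (-(2 * σ)) := japow_summable hσ
  set KR := ∑' k : ℤ, japow k (-(2 * σ)) with hKRdef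
  have hKR0 : 0 ≤ KR := tsum_nonneg fun k => japow_nonneg k _
  refine ⟨Real.sqrt (8 * KR / Real.pi) + 1, by positivity, ?_⟩
  intro v f hv hf
  have hf' : Summable fun k : ℤ => ‖f k‖ ^ 2 :=
    hf.congr fun k => by rw [mul_zero, japow_zero, one_mul]
  set A := ∑' k : ℤ, japow k (2 * σ) * ‖v k‖ ^ 2 with hAdef
  set B := ∑' k : ℤ, ‖f k‖ ^ 2 with hBdef
  have hA0 : 0 ≤ A := tsum_nonneg fun k => mul_nonneg (japow_nonneg k _) (sq_nonneg _)
  have hB0 : 0 ≤ B := tsum_nonneg fun k => sq_nonneg _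
  set aE : ℤ → ℝ≥0∞ := fun k => (‖v k‖₊ : ℝ≥0∞) with haE
  set bE : ℤ → ℝ≥0∞ := fun k => (‖f k‖₊ : ℝ≥0∞) with hbE
  -- ℓ² sums in ℝ≥0∞
  have SB : ∑' k : ℤ, bE k ^ 2 = ENNReal.ofReal B := by
    calc ∑' k : ℤ, bE k ^ 2 = ∑' k : ℤ, ENNReal.ofReal (‖f k‖ ^ 2) :=
          tsum_congr fun k => by
            rw [ENNReal.ofReal_pow (norm_nonneg _), ofReal_norm, enorm_eq_nnnorm]
      _ = ENNReal.ofReal B :=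
          (ENNReal.ofReal_tsum_of_nonneg (fun k => sq_nonneg _) hf').symm
  have SA : ∑' k : ℤ, ENNReal.ofReal (japow k (2 * σ)) * aE k ^ 2 = ENNReal.ofReal A := by
    calc ∑' k : ℤ, ENNReal.ofReal (japow k (2 * σ)) * aE k ^ 2
        = ∑' k : ℤ, ENNReal.ofReal (japow k (2 * σ) * ‖v k‖ ^ 2) :=
          tsum_congr fun k => by
            rw [ENNReal.ofReal_mul (japow_nonneg k _), ENNReal.ofReal_pow (norm_nonneg _),
              ofReal_norm, enorm_eq_nnnorm]
      _ = ENNReal.ofReal A :=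
          (ENNReal.ofReal_tsum_of_nonneg
            (fun k => mul_nonneg (japow_nonneg k _) (sq_nonneg _)) hv).symm
  -- ℓ¹ bound for v in ℝ≥0∞ (Cauchy–Schwarz)
  have hl1 : (∑' k : ℤ, aE k) ^ 2 ≤ 2 * (ENNReal.ofReal KR * ENNReal.ofReal A) := by
    have hsplit : ∀ k : ℤ,
        aE k = ENNReal.ofReal (japow k (-σ)) * (ENNReal.ofReal (japow k σ) * aE k) := by
      intro k
      rw [← mul_assoc, ← ENNReal.ofReal_mul (japow_nonneg _ _), japow_mul_neg,
        ENNReal.ofReal_one, one_mul]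
    calc (∑' k : ℤ, aE k) ^ 2
        = (∑' k : ℤ, ENNReal.ofReal (japow k (-σ)) * (ENNReal.ofReal (japow k σ) * aE k)) ^ 2 := by
          rw [tsum_congr hsplit]
      _ ≤ 2 * ((∑' k : ℤ, ENNReal.ofReal (japow k (-σ)) ^ 2)
            * ∑' k : ℤ, (ENNReal.ofReal (japow k σ) * aE k) ^ 2) := ecs _ _
      _ = 2 * (ENNReal.ofReal KR * ENNReal.ofReal A) := by
          congr 2
          · calc ∑' k : ℤ, ENNReal.ofReal (japow k (-σ)) ^ 2
                = ∑' k : ℤ, ENNReal.ofReal (japow k (-(2 * σ))) :=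
                  tsum_congr fun k => by
                    rw [← ENNReal.ofReal_pow (japow_nonneg _ _), japow_sq,
                      show 2 * (-σ) = -(2 * σ) by ring]
              _ = ENNReal.ofReal KR :=
                  (ENNReal.ofReal_tsum_of_nonneg (fun k => japow_nonneg _ _) hK).symm
          · calc ∑' k : ℤ, (ENNReal.ofReal (japow k σ) * aE k) ^ 2
                = ∑' k : ℤ, ENNReal.ofReal (japow k (2 * σ)) * aE k ^ 2 :=
                  tsum_congr fun k => by
                    rw [mul_pow, ← ENNReal.ofReal_pow (japow_nonneg _ _), japow_sq]
              _ = ENNReal.ofReal A := SA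
  have hfinRHS : 2 * (ENNReal.ofReal KR * ENNReal.ofReal A) ≠ ⊤ :=
    ENNReal.mul_ne_top (by norm_num)
      (ENNReal.mul_ne_top ENNReal.ofReal_ne_top ENNReal.ofReal_ne_top)
  have hl1top : (∑' k : ℤ, aE k) ≠ ⊤ := by
    intro h
    rw [h] at hl1
    rw [ENNReal.top_pow (by norm_num)] at hl1
    exact hfinRHS (top_le_iff.mp hl1)
  have hv1 : Summable fun k : ℤ => ‖v k‖ := by
    have h := ENNReal.tsum_coe_ne_top_iff_summable.mp hl1top
    have := NNReal.summable_coe.mpr h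
    simpa using this
  have hfB : ∀ ℓ : ℤ, ‖f ℓ‖ ≤ Real.sqrt B := by
    intro ℓ
    have h1 : ‖f ℓ‖ ^ 2 ≤ B := hf'.le_tsum ℓ fun _ _ => sq_nonneg _
    calc ‖f ℓ‖ = Real.sqrt (‖f ℓ‖ ^ 2) := (Real.sqrt_sq (norm_nonneg _)).symm
      _ ≤ Real.sqrt B := Real.sqrt_le_sqrt h1
  have hSnn : ∀ k : ℤ, Summable fun ℓ : ℤ => ‖v (k - ℓ)‖ * ‖f ℓ‖ := by
    intro k
    have hs : Summable fun ℓ : ℤ => ‖v (k - ℓ)‖ :=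
      (((Equiv.subLeft k).summable_iff).mpr hv1).congr fun ℓ => by
        simp [Function.comp, Equiv.subLeft_apply]
    exact Summable.of_nonneg_of_le
      (fun ℓ => mul_nonneg (norm_nonneg _) (norm_nonneg _))
      (fun ℓ => mul_le_mul_of_nonneg_left (hfB ℓ) (norm_nonneg _))
      (hs.mul_right (Real.sqrt B))
  have hsum1 : ∀ k : ℤ, Summable fun ℓ : ℤ => v (k - ℓ) * f ℓ := fun k =>
    Summable.of_norm (((hSnn k).congr fun ℓ => (norm_mul _ _).symm))
  have hsum2 : ∀ k : ℤ, Summable fun ℓ : ℤ =>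
      v (k - ℓ) * (-Complex.I * ((Int.sign ℓ : ℤ) : ℂ) * f ℓ) := by
    intro k
    refine Summable.of_norm_bounded (hSnn k) fun ℓ => ?_
    rw [norm_mul, norm_mul, norm_mul]
    have h1 : ‖(-Complex.I : ℂ)‖ = 1 := by simp
    have h2 := sign_norm_le ℓ
    have h3 := norm_nonneg (f ℓ)
    refine mul_le_mul_of_nonneg_left ?_ (norm_nonneg _)
    calc ‖(-Complex.I : ℂ)‖ * ‖((Int.sign ℓ : ℤ) : ℂ)‖ * ‖f ℓ‖
        = ‖((Int.sign ℓ : ℤ) : ℂ)‖ * ‖f ℓ‖ := by rw [h1, one_mul]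
      _ ≤ 1 * ‖f ℓ‖ := mul_le_mul_of_nonneg_right h2 h3
      _ = ‖f ℓ‖ := one_mul _
  have hcomm : ∀ k : ℤ, ‖commH v f k‖ ≤ 2 * ∑' ℓ : ℤ, ‖v (k - ℓ)‖ * ‖f ℓ‖ := by
    intro k
    have e1 : Summable fun ℓ : ℤ =>
        -Complex.I * ((Int.sign k : ℤ) : ℂ) * (v (k - ℓ) * f ℓ) := (hsum1 k).mul_left _
    have e2 := hsum2 k
    have h1 : hilbC (convC v f) k
        = ∑' ℓ : ℤ, -Complex.I * ((Int.sign k : ℤ) : ℂ) * (v (k - ℓ) * f ℓ) := by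
      unfold hilbC convC
      exact (tsum_mul_left).symm
    have h2 : convC v (hilbC f) k
        = ∑' ℓ : ℤ, v (k - ℓ) * (-Complex.I * ((Int.sign ℓ : ℤ) : ℂ) * f ℓ) := rfl
    have heq : commH v f k = ∑' ℓ : ℤ,
        (-Complex.I * ((Int.sign k : ℤ) : ℂ) * (v (k - ℓ) * f ℓ)
          - v (k - ℓ) * (-Complex.I * ((Int.sign ℓ : ℤ) : ℂ) * f ℓ)) := by
      rw [e1.tsum_sub e2]
      unfold commH
      rw [h1, h2]
    rw [heq]
    refine tsum_of_norm_bounded ((hSnn k).hasSum.mul_left 2) fun ℓ => ?_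
    have hfac : -Complex.I * ((Int.sign k : ℤ) : ℂ) * (v (k - ℓ) * f ℓ)
        - v (k - ℓ) * (-Complex.I * ((Int.sign ℓ : ℤ) : ℂ) * f ℓ)
        = (-Complex.I * (((Int.sign k : ℤ) : ℂ) - ((Int.sign ℓ : ℤ) : ℂ))) * (v (k - ℓ) * f ℓ) := by
      ring
    rw [hfac, norm_mul, norm_mul, norm_mul]
    have hI : ‖(-Complex.I : ℂ)‖ = 1 := by simp
    have hs : ‖(((Int.sign k : ℤ) : ℂ) - ((Int.sign ℓ : ℤ) : ℂ))‖ ≤ 2 := by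
      calc ‖(((Int.sign k : ℤ) : ℂ) - ((Int.sign ℓ : ℤ) : ℂ))‖
          ≤ ‖((Int.sign k : ℤ) : ℂ)‖ + ‖((Int.sign ℓ : ℤ) : ℂ)‖ := norm_sub_le _ _
        _ ≤ 2 := by linarith [sign_norm_le k, sign_norm_le ℓ]
    rw [hI, one_mul]
    exact mul_le_mul_of_nonneg_right hs (mul_nonneg (norm_nonneg _) (norm_nonneg _))
  -- to ℝ≥0∞
  have hcommE : ∀ k : ℤ, (‖commH v f k‖₊ : ℝ≥0∞) ≤ 2 * ∑' ℓ : ℤ, aE (k - ℓ) * bE ℓ := by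
    intro k
    rw [← enorm_eq_nnnorm, ← ofReal_norm]
    refine le_trans (ENNReal.ofReal_le_ofReal (hcomm k)) (le_of_eq ?_)
    rw [ENNReal.ofReal_mul (by norm_num : (0:ℝ) ≤ 2),
      ENNReal.ofReal_tsum_of_nonneg (fun ℓ => mul_nonneg (norm_nonneg _) (norm_nonneg _)) (hSnn k)]
    congr 1
    · norm_num
    · exact tsum_congr fun ℓ => by
        rw [ENNReal.ofReal_mul (norm_nonneg _), ofReal_norm, enorm_eq_nnnorm,
          ofReal_norm, enorm_eq_nnnorm]
  have hS_E : ∑' k : ℤ, (‖commH v f k‖₊ : ℝ≥0∞) ^ 2 ≤ ENNReal.ofReal (16 * (KR * (A * B))) := by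
    calc ∑' k : ℤ, (‖commH v f k‖₊ : ℝ≥0∞) ^ 2
        ≤ ∑' k : ℤ, (2 * ∑' ℓ : ℤ, aE (k - ℓ) * bE ℓ) ^ 2 := by
          refine ENNReal.tsum_le_tsum fun k => ?_
          gcongr
          exact hcommE k
      _ = 4 * ∑' k : ℤ, (∑' ℓ : ℤ, aE (k - ℓ) * bE ℓ) ^ 2 := by
          simp_rw [mul_pow]
          rw [ENNReal.tsum_mul_left]
          norm_num
      _ ≤ 4 * (2 * ((∑' k : ℤ, aE k) ^ 2 * ∑' k : ℤ, bE k ^ 2)) := by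
          gcongr
          exact eyoung aE bE
      _ ≤ 4 * (2 * ((2 * (ENNReal.ofReal KR * ENNReal.ofReal A)) * ENNReal.ofReal B)) := by
          exact mul_le_mul_right (mul_le_mul_right (mul_le_mul' hl1 SB.le) 2) 4
      _ = ENNReal.ofReal (16 * (KR * (A * B))) := by
          rw [ENNReal.ofReal_mul (by norm_num : (0:ℝ) ≤ 16),
            ENNReal.ofReal_mul hKR0, ENNReal.ofReal_mul hA0]
          rw [show ENNReal.ofReal 16 = 16 by norm_num]
          ring
  have hfin : (∑' k : ℤ, (‖commH v f k‖₊ : ℝ≥0∞) ^ 2) ≠ ⊤ :=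
    ne_top_of_le_ne_top ENNReal.ofReal_ne_top hS_E
  have hsq : Summable fun k : ℤ => (‖commH v f k‖₊ ^ 2 : ℝ≥0) := by
    refine ENNReal.tsum_coe_ne_top_iff_summable.mp ?_
    simpa [ENNReal.coe_pow] using hfin
  have hfS : Summable fun k : ℤ => ‖commH v f k‖ ^ 2 := by
    have := NNReal.summable_coe.mpr hsq
    simpa using this
  set S := ∑' k : ℤ, ‖commH v f k‖ ^ 2 with hSdef
  have hSle : S ≤ 16 * (KR * (A * B)) := by
    rw [← ENNReal.ofReal_le_ofReal_iff (by positivity)]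
    have hofS : ENNReal.ofReal S = ∑' k : ℤ, (‖commH v f k‖₊ : ℝ≥0∞) ^ 2 := by
      rw [ENNReal.ofReal_tsum_of_nonneg (fun k => sq_nonneg _) hfS]
      exact tsum_congr fun k => by
        rw [ENNReal.ofReal_pow (norm_nonneg _), ofReal_norm, enorm_eq_nnnorm]
    rw [hofS]
    exact hS_E
  -- final step
  simp only [hsNorm, hsNormSq]
  simp_rw [mul_zero, japow_zero, one_mul]
  exact final_sqrt KR A B S _ hKR0 hA0 hB0 hSle rfl
end
end

section
/- Let Ω be an open bounded subset of R^n, and let {u_m}, {v_m} be sequences in L²(Ω) with u, v ∈ L²(Ω) and constants δ, C > 0 such that: (a) v_m → v a.e. in Ω; (b) δ ≤ v_m ≤ C a.e. in Ω for all m; (c) u_m ⇀ u weakly in L²(Ω); (d) ∫_Ω v_m u_m² dx → ∫_Ω v u² dx. Then u_m → u strongly in L²(Ω). -/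
open MeasureTheory Filter

variable {α : Type*} [MeasurableSpace α] {μ : Measure α}

lemma l2_mul_integrable {f g : α → ℝ} (hf : MemLp f 2 μ) (hg : MemLp g 2 μ) :
    Integrable (fun x => f x * g x) μ := by
  have h : MemLp (f • g) 1 μ := hg.smul hf (hpqr := ⟨by simp [ENNReal.inv_two_add_inv_two]⟩)
  simpa [smul_eq_mul, Pi.mul_def] using memLp_one_iff_integrable.mp h

lemma bdd_mul_memL2 {w f : α → ℝ} {C : ℝ} (hw : AEStronglyMeasurable w μ)
    (hwb : ∀ᵐ x ∂μ, |w x| ≤ C) (hf : MemLp f 2 μ) :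
    MemLp (fun x => w x * f x) 2 μ := by
  refine MemLp.of_le (hf.const_mul C) (hw.mul hf.1) ?_
  filter_upwards [hwb] with x hx
  have hC : 0 ≤ C := le_trans (abs_nonneg _) hx
  simp only [norm_mul, Real.norm_eq_abs, abs_of_nonneg hC]
  exact mul_le_mul_of_nonneg_right hx (abs_nonneg _)

lemma l2_cauchy_schwarz {f g : α → ℝ} (hf : MemLp f 2 μ) (hg : MemLp g 2 μ) :
    |∫ x, f x * g x ∂μ| ≤ Real.sqrt (∫ x, f x ^ 2 ∂μ) * Real.sqrt (∫ x, g x ^ 2 ∂μ) := by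
  have h2 : ENNReal.ofReal (2:ℝ) = 2 := by norm_num
  have hf' : MemLp f (ENNReal.ofReal (2:ℝ)) μ := by rwa [h2]
  have hg' : MemLp g (ENNReal.ofReal (2:ℝ)) μ := by rwa [h2]
  have hpq : (2:ℝ).HolderConjugate 2 := Real.HolderConjugate.two_two
  have key := integral_mul_norm_le_Lp_mul_Lq hpq hf' hg'
  have h1 : |∫ x, f x * g x ∂μ| ≤ ∫ x, ‖f x‖ * ‖g x‖ ∂μ := by
    calc |∫ x, f x * g x ∂μ| ≤ ∫ x, ‖f x * g x‖ ∂μ := by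
          simpa [Real.norm_eq_abs] using norm_integral_le_integral_norm (fun x => f x * g x) (μ := μ)
      _ = ∫ x, ‖f x‖ * ‖g x‖ ∂μ := by simp [norm_mul]
  have heq : ∀ h : α → ℝ, (∫ x, ‖h x‖ ^ (2:ℝ) ∂μ) = ∫ x, h x ^ 2 ∂μ := by
    intro h
    refine integral_congr_ae (Eventually.of_forall fun x => ?_)
    have hx : ‖h x‖ ^ (2:ℝ) = h x ^ 2 := by
      rw [show (2:ℝ) = ((2:ℕ):ℝ) by norm_num, Real.rpow_natCast]
      simp [Real.norm_eq_abs, sq_abs]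
    simpa using hx
  rw [heq f, heq g] at key
  calc |∫ x, f x * g x ∂μ| ≤ ∫ x, ‖f x‖ * ‖g x‖ ∂μ := h1
    _ ≤ (∫ x, f x ^ 2 ∂μ) ^ (1/2:ℝ) * (∫ x, g x ^ 2 ∂μ) ^ (1/2:ℝ) := key
    _ = Real.sqrt (∫ x, f x ^ 2 ∂μ) * Real.sqrt (∫ x, g x ^ 2 ∂μ) := by
        rw [Real.sqrt_eq_rpow, Real.sqrt_eq_rpow]

/-- Let `Ω ⊆ ℝⁿ` be open and bounded, `{uₘ}, {vₘ} ⊆ L²(Ω)`, `u, v ∈ L²(Ω)`,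
and `δ, C > 0` with: (a) `vₘ → v` a.e. in `Ω`; (b) `δ ≤ vₘ ≤ C` a.e. in `Ω` for all `m`;
(c) `uₘ ⇀ u` weakly in `L²(Ω)`; (d) `∫ vₘ uₘ² → ∫ v u²`. Then `uₘ → u` strongly in `L²(Ω)`. -/
theorem stmt_18 (n : ℕ) (Ω : Set (EuclideanSpace ℝ (Fin n))) (hΩo : IsOpen Ω)
    (hΩb : Bornology.IsBounded Ω)
    (u v : ℕ → EuclideanSpace ℝ (Fin n) → ℝ) (U V : EuclideanSpace ℝ (Fin n) → ℝ)
    (δ C : ℝ) (hδ : 0 < δ) (hC : 0 < C)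
    (hu : ∀ m, MemLp (u m) 2 (volume.restrict Ω))
    (hv : ∀ m, MemLp (v m) 2 (volume.restrict Ω))
    (hU : MemLp U 2 (volume.restrict Ω)) (hV : MemLp V 2 (volume.restrict Ω))
    (hae : ∀ᵐ x ∂(volume.restrict Ω), Tendsto (fun m => v m x) atTop (nhds (V x)))
    (hbd : ∀ m, ∀ᵐ x ∂(volume.restrict Ω), δ ≤ v m x ∧ v m x ≤ C)
    (hweak : ∀ w : EuclideanSpace ℝ (Fin n) → ℝ, MemLp w 2 (volume.restrict Ω) →
      Tendsto (fun m => ∫ x, u m x * w x ∂(volume.restrict Ω)) atTop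
        (nhds (∫ x, U x * w x ∂(volume.restrict Ω))))
    (henergy : Tendsto (fun m => ∫ x, v m x * (u m x) ^ 2 ∂(volume.restrict Ω)) atTop
      (nhds (∫ x, V x * (U x) ^ 2 ∂(volume.restrict Ω)))) :
    Tendsto (fun m => ∫ x, (u m x - U x) ^ 2 ∂(volume.restrict Ω)) atTop (nhds 0) := by
  set μ := volume.restrict Ω with hμ
  -- combined bound facts
  have hbd' : ∀ᵐ x ∂μ, ∀ m, δ ≤ v m x ∧ v m x ≤ C := ae_all_iff.2 hbd
  have hVbd : ∀ᵐ x ∂μ, δ ≤ V x ∧ V x ≤ C := by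
    filter_upwards [hae, hbd'] with x hx1 hx2
    exact ⟨ge_of_tendsto' hx1 fun m => (hx2 m).1, le_of_tendsto' hx1 fun m => (hx2 m).2⟩
  have hvabs : ∀ m, ∀ᵐ x ∂μ, |v m x| ≤ C := by
    intro m; filter_upwards [hbd m] with x hx
    exact abs_le.2 ⟨by linarith, hx.2⟩
  have hVabs : ∀ᵐ x ∂μ, |V x| ≤ C := by
    filter_upwards [hVbd] with x hx; exact abs_le.2 ⟨by linarith, hx.2⟩
  -- MemLp facts
  have hvU2 : ∀ m, MemLp (fun x => v m x * U x) 2 μ :=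
    fun m => bdd_mul_memL2 (hv m).1 (hvabs m) hU
  have hVU2 : MemLp (fun x => V x * U x) 2 μ := bdd_mul_memL2 hV.1 hVabs hU
  have hgm2 : ∀ m, MemLp (fun x => (v m x - V x) * U x) 2 μ := by
    intro m
    refine bdd_mul_memL2 (C := 2*C) ((hv m).1.sub hV.1) ?_ hU
    filter_upwards [hbd m, hVbd] with x hx1 hx2
    exact abs_le.2 ⟨by linarith, by linarith⟩
  have huU2 : ∀ m, MemLp (fun x => u m x - U x) 2 μ := by
    intro m; simpa [Pi.sub_def] using (hu m).sub hU
  -- Integrability facts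
  have I1 : ∀ m, Integrable (fun x => v m x * u m x ^ 2) μ := by
    intro m
    have := l2_mul_integrable (bdd_mul_memL2 (hv m).1 (hvabs m) (hu m)) (hu m)
    simpa [pow_two, mul_assoc] using this
  have I2 : ∀ m, Integrable (fun x => u m x * (v m x * U x)) μ :=
    fun m => l2_mul_integrable (hu m) (hvU2 m)
  have I3 : ∀ m, Integrable (fun x => v m x * U x ^ 2) μ := by
    intro m
    have := l2_mul_integrable (hvU2 m) hU
    simpa [pow_two, mul_assoc] using this
  have I4 : ∀ m, Integrable (fun x => v m x * (u m x - U x) ^ 2) μ := by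
    intro m
    have := l2_mul_integrable (bdd_mul_memL2 (hv m).1 (hvabs m) (huU2 m)) (huU2 m)
    simpa [pow_two, mul_assoc] using this
  -- B term: dominated convergence
  have hU2meas : AEStronglyMeasurable (fun x => U x ^ 2) μ := by
    simpa [pow_two, Pi.mul_def] using hU.1.mul hU.1
  have hB : Tendsto (fun m => ∫ x, v m x * U x ^ 2 ∂μ) atTop
      (nhds (∫ x, V x * U x ^ 2 ∂μ)) := by
    refine tendsto_integral_of_dominated_convergence (fun x => C * U x ^ 2)
      (fun m => (hv m).1.mul hU2meas) (hU.integrable_sq.const_mul C) ?_ ?_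
    · intro m
      filter_upwards [hbd m] with x hx
      rw [Real.norm_eq_abs, abs_mul]
      have : |v m x| ≤ C := abs_le.2 ⟨by linarith [hx.1], hx.2⟩
      calc |v m x| * |U x ^ 2| ≤ C * |U x ^ 2| :=
            mul_le_mul_of_nonneg_right this (abs_nonneg _)
        _ = C * U x ^ 2 := by rw [abs_of_nonneg (sq_nonneg _)]
    · filter_upwards [hae] with x hx
      exact hx.mul_const _
  -- ∫ (g m)^2 → 0 where g m = (v m - V) * U
  have hg2 : Tendsto (fun m => ∫ x, ((v m x - V x) * U x) ^ 2 ∂μ) atTop (nhds 0) := by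
    have h0 : (0:ℝ) = ∫ x, (0:ℝ) ∂μ := by simp
    rw [h0]
    refine tendsto_integral_of_dominated_convergence (fun x => (2*C) ^ 2 * U x ^ 2)
      (fun m => ?_) ((hU.integrable_sq.const_mul _)) ?_ ?_
    · have := ((hv m).1.sub hV.1).mul hU.1
      simpa [pow_two, Pi.mul_def, Pi.sub_def] using this.mul this
    · intro m
      filter_upwards [hbd m, hVbd] with x hx1 hx2
      rw [Real.norm_eq_abs, abs_of_nonneg (sq_nonneg _), mul_pow]
      have h1 : (v m x - V x) ^ 2 ≤ (2*C) ^ 2 := by nlinarith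
      nlinarith [sq_nonneg (U x)]
    · filter_upwards [hae] with x hx
      have : Tendsto (fun m => ((v m x - V x) * U x) ^ 2) atTop
          (nhds (((V x - V x) * U x) ^ 2)) :=
        (((hx.sub tendsto_const_nhds).mul_const (U x)).pow 2)
      simpa using this
  -- bound on ∫ (u m)^2
  obtain ⟨M, hM⟩ := (henergy.bddAbove_range).imp fun M hM =>
    fun m => hM (Set.mem_range_self m)
  have hu2bd : ∀ m, ∫ x, u m x ^ 2 ∂μ ≤ M / δ := by
    intro m
    have hle : ∫ x, δ * u m x ^ 2 ∂μ ≤ ∫ x, v m x * u m x ^ 2 ∂μ := by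
      refine integral_mono_ae ((hu m).integrable_sq.const_mul δ) (I1 m) ?_
      filter_upwards [hbd m] with x hx
      exact mul_le_mul_of_nonneg_right hx.1 (sq_nonneg _)
    rw [integral_const_mul] at hle
    rw [le_div_iff₀ hδ, mul_comm]
    exact hle.trans (hM m)
  -- A term
  have hA : Tendsto (fun m => ∫ x, u m x * (v m x * U x) ∂μ) atTop
      (nhds (∫ x, V x * U x ^ 2 ∂μ)) := by
    have hsplit : ∀ m, ∫ x, u m x * (v m x * U x) ∂μ =
        (∫ x, u m x * ((v m x - V x) * U x) ∂μ) + ∫ x, u m x * (V x * U x) ∂μ := by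
      intro m
      rw [← integral_add (l2_mul_integrable (hu m) (hgm2 m))
        (l2_mul_integrable (hu m) hVU2)]
      exact integral_congr_ae (Filter.Eventually.of_forall fun x => by ring)
    have h1 : Tendsto (fun m => ∫ x, u m x * ((v m x - V x) * U x) ∂μ) atTop (nhds 0) := by
      refine squeeze_zero_norm (a := fun m => Real.sqrt (M / δ) *
          Real.sqrt (∫ x, ((v m x - V x) * U x) ^ 2 ∂μ)) (fun m => ?_) ?_
      · rw [Real.norm_eq_abs]
        refine (l2_cauchy_schwarz (hu m) (hgm2 m)).trans ?_
        exact mul_le_mul_of_nonneg_right (Real.sqrt_le_sqrt (hu2bd m)) (Real.sqrt_nonneg _)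
      · have := (Real.continuous_sqrt.tendsto 0).comp hg2
        have h2 : Tendsto (fun m => Real.sqrt (M / δ) *
            Real.sqrt (∫ x, ((v m x - V x) * U x) ^ 2 ∂μ)) atTop
            (nhds (Real.sqrt (M/δ) * Real.sqrt 0)) := tendsto_const_nhds.mul this
        simpa using h2
    have h2 : Tendsto (fun m => ∫ x, u m x * (V x * U x) ∂μ) atTop
        (nhds (∫ x, V x * U x ^ 2 ∂μ)) := by
      have := hweak (fun x => V x * U x) hVU2
      rw [show (∫ x, U x * (V x * U x) ∂μ) = ∫ x, V x * U x ^ 2 ∂μ from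
        integral_congr_ae (Filter.Eventually.of_forall fun x => by ring)] at this
      exact this
    have := h1.add h2
    rw [zero_add] at this
    exact Tendsto.congr (fun m => (hsplit m).symm) this
  -- expansion
  have hexp : ∀ m, ∫ x, v m x * (u m x - U x) ^ 2 ∂μ =
      (∫ x, v m x * u m x ^ 2 ∂μ) - 2 * (∫ x, u m x * (v m x * U x) ∂μ)
        + ∫ x, v m x * U x ^ 2 ∂μ := by
    intro m
    have step1 : ∫ x, v m x * (u m x - U x) ^ 2 ∂μ =
        ∫ x, (v m x * u m x ^ 2 - 2 * (u m x * (v m x * U x)) + v m x * U x ^ 2) ∂μ :=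
      integral_congr_ae (Filter.Eventually.of_forall fun x => by ring)
    have Isub : Integrable (fun x => v m x * u m x ^ 2 - 2 * (u m x * (v m x * U x))) μ :=
      (I1 m).sub ((I2 m).const_mul 2)
    rw [step1, integral_add Isub (I3 m),
      integral_sub (I1 m) ((I2 m).const_mul 2), integral_const_mul]
  -- key convergence
  have key : Tendsto (fun m => ∫ x, v m x * (u m x - U x) ^ 2 ∂μ) atTop (nhds 0) := by
    have h := (henergy.sub (hA.const_mul 2)).add hB
    rw [show (∫ x, V x * U x ^ 2 ∂μ) - 2 * (∫ x, V x * U x ^ 2 ∂μ)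
        + (∫ x, V x * U x ^ 2 ∂μ) = 0 by ring] at h
    exact Tendsto.congr (fun m => (hexp m).symm) h
  -- squeeze
  refine squeeze_zero (fun m => integral_nonneg fun x => sq_nonneg _) (fun m => ?_)
    (by simpa using key.const_mul δ⁻¹)
  have hle : δ * ∫ x, (u m x - U x) ^ 2 ∂μ ≤ ∫ x, v m x * (u m x - U x) ^ 2 ∂μ := by
    rw [← integral_const_mul]
    refine integral_mono_ae (((huU2 m).integrable_sq).const_mul δ) (I4 m) ?_
    filter_upwards [hbd m] with x hx
    exact mul_le_mul_of_nonneg_right hx.1 (sq_nonneg _)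
  calc ∫ x, (u m x - U x) ^ 2 ∂μ = δ⁻¹ * (δ * ∫ x, (u m x - U x) ^ 2 ∂μ) := by
        field_simp
    _ ≤ δ⁻¹ * ∫ x, v m x * (u m x - U x) ^ 2 ∂μ := by
        exact mul_le_mul_of_nonneg_left hle (inv_nonneg.2 hδ.le)
end
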